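/- If G_1, ..., G_n are independent geometric random variables with G_i ~ Geom(1 - q_i) (counting failures before success, so Pr[G_i = k] = (1-q_i) q_i^k), and q := q_1 + ... + q_n < 1, then G_1 + ... + G_n is stochastically dominated by a random variable G ~ Geom(1 - q), i.e., Pr[G_1 + ... + G_n ≥ x] ≤ Pr[G ≥ x] for all x. -/

import Mathlib

open MeasureTheory ProbabilityTheory

lemma exists_decomp {n : ℕ} (x : ℕ) (g : Fin n → ℕ) (hx : x ≤ ∑ i, g i) :
    ∃ k : Fin n → ℕ, (∀ i, k i ≤ g i) ∧ ∑ i, k i = x := by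
  induction x with
  | zero => exact ⟨0, fun i => Nat.zero_le _, by simp⟩
  | succ x ih =>
    obtain ⟨k, hk, hks⟩ := ih (Nat.le_of_succ_le hx)
    have : ∃ i, k i < g i := by
      by_contra h
      push_neg at h
      have : ∑ i, g i ≤ ∑ i, k i := Finset.sum_le_sum fun i _ => h i
      omega
    obtain ⟨i, hi⟩ := this
    refine ⟨Function.update k i (k i + 1), fun j => ?_, ?_⟩
    · rcases eq_or_ne j i with rfl | hj
      · simpa using hi
      · simp [Function.update_of_ne hj, hk j]
    · rw [Finset.sum_update_of_mem (Finset.mem_univ i)]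
      rw [← hks, ← Finset.sum_erase_add _ _ (Finset.mem_univ i),
        Finset.sdiff_singleton_eq_erase]
      omega

theorem sum_geometric_stochastically_dominated {Ω : Type*} [MeasurableSpace Ω]
    (μ : Measure Ω) [IsProbabilityMeasure μ]
    (n : ℕ) (q : Fin n → ℝ) (G : Fin n → Ω → ℕ)
    (hq0 : ∀ i, 0 ≤ q i) (hq1 : ∑ i, q i < 1)
    (hmeas : ∀ i, Measurable (G i))
    (hdist : ∀ i (k : ℕ), μ {ω | G i ω = k} = ENNReal.ofReal ((1 - q i) * (q i) ^ k))
    (hindep : iIndepFun G μ) :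
    ∀ x : ℕ, μ {ω | x ≤ ∑ i, G i ω} ≤ ENNReal.ofReal ((∑ i, q i) ^ x) := by
  intro x
  have hqi1 : ∀ i, q i < 1 := by
    intro i
    calc q i ≤ ∑ j, q j := Finset.single_le_sum (fun j _ => hq0 j) (Finset.mem_univ i)
    _ < 1 := hq1
  -- tail measure
  have htail : ∀ i (k : ℕ), μ {ω | k ≤ G i ω} = ENNReal.ofReal (q i ^ k) := by
    intro i k
    have hlt : μ {ω | G i ω < k} = ENNReal.ofReal (1 - q i ^ k) := by
      have hset : {ω | G i ω < k} = ⋃ j ∈ Finset.range k, {ω | G i ω = j} := by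
        ext ω; simp
      rw [hset, measure_biUnion_finset]
      · have : ∀ j ∈ Finset.range k, μ {ω | G i ω = j}
            = ENNReal.ofReal ((1 - q i) * q i ^ j) := fun j _ => hdist i j
        rw [Finset.sum_congr rfl this, ← ENNReal.ofReal_sum_of_nonneg]
        · congr 1
          rw [← Finset.mul_sum]
          have := geom_sum_mul (q i) k
          nlinarith [this]
        · intro j _
          have := hqi1 i
          have := pow_nonneg (hq0 i) j
          nlinarith
      · intro a _ b _ hab
        simp only [Function.onFun, Set.disjoint_left]
        rintro ω h1 h2
        exact hab (h1.symm.trans h2)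
      · intro j _
        exact hmeas i (measurableSet_singleton j)
    have hcompl : {ω | k ≤ G i ω} = {ω | G i ω < k}ᶜ := by
      ext ω; simp [not_lt]
    have hms : MeasurableSet {ω | G i ω < k} := hmeas i measurableSet_Iio
    rw [hcompl, measure_compl hms (measure_ne_top μ _), measure_univ, hlt]
    rw [show (1 : ENNReal) = ENNReal.ofReal 1 by simp, ← ENNReal.ofReal_sub _ (by
      have h0 := pow_nonneg (hq0 i) k
      have h1 := pow_le_one₀ (n := k) (hq0 i) (hqi1 i).le
      linarith)]
    ring_nf
  -- covering
  set S : Finset (Fin n → ℕ) := Finset.piAntidiag Finset.univ x with hS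
  have hsub : {ω | x ≤ ∑ i, G i ω} ⊆ ⋃ k ∈ S, ⋂ i, {ω | k i ≤ G i ω} := by
    intro ω hω
    obtain ⟨k, hk, hks⟩ := exists_decomp x (fun i => G i ω) hω
    have hmem : k ∈ S := by
      rw [hS, Finset.mem_piAntidiag]
      exact ⟨hks, fun i _ => Finset.mem_univ i⟩
    exact Set.mem_biUnion hmem (Set.mem_iInter.2 fun i => hk i)
  calc μ {ω | x ≤ ∑ i, G i ω}
      ≤ μ (⋃ k ∈ S, ⋂ i, {ω | k i ≤ G i ω}) := measure_mono hsub
    _ ≤ ∑ k ∈ S, μ (⋂ i, {ω | k i ≤ G i ω}) := measure_biUnion_finset_le S _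
    _ = ∑ k ∈ S, ENNReal.ofReal (∏ i, q i ^ k i) := by
        refine Finset.sum_congr rfl fun k _ => ?_
        rw [hindep.meas_iInter (s := fun i => {ω | k i ≤ G i ω})
          (fun i => ⟨Set.Ici (k i), measurableSet_Ici, rfl⟩)]
        rw [Finset.prod_congr rfl fun i _ => htail i (k i),
          ← ENNReal.ofReal_prod_of_nonneg (fun i _ => pow_nonneg (hq0 i) _)]
    _ = ENNReal.ofReal (∑ k ∈ S, ∏ i, q i ^ k i) := by
        rw [ENNReal.ofReal_sum_of_nonneg]
        intro k _
        exact Finset.prod_nonneg fun i _ => pow_nonneg (hq0 i) _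
    _ ≤ ENNReal.ofReal ((∑ i, q i) ^ x) := by
        apply ENNReal.ofReal_le_ofReal
        rw [Finset.sum_pow_eq_sum_piAntidiag]
        refine Finset.sum_le_sum fun k hk => ?_
        have h1 : (1 : ℝ) ≤ (Nat.multinomial Finset.univ k : ℝ) := by
          exact_mod_cast Nat.one_le_iff_ne_zero.2 (Nat.multinomial_pos _ _).ne'
        have h2 : (0:ℝ) ≤ ∏ i, q i ^ k i :=
          Finset.prod_nonneg fun i _ => pow_nonneg (hq0 i) _
        nlinarith
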